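/- Let n ≥ 1 be an integer, k ≥ 1 an integer, and let μ_1 ≤ μ_2 ≤ ⋯ ≤ μ_{k+1} be positive real numbers satisfying Σ_{i=1}^k (μ_{k+1} − μ_i)² ≤ (4/n) Σ_{i=1}^k μ_i (μ_{k+1} − μ_i). For m = k and m = k+1 define Λ_m = (1/m) Σ_{i=1}^m μ_i, T_m = (1/m) Σ_{i=1}^m μ_i², and F_m = (1 + 2/n) Λ_m² − T_m. Then F_{k+1} ≤ C(n,k) ((k+1)/k)^{4/n} F_k, where C(n,k) = 1 − (1/(3n)) (k/(k+1))^{4/n} (1 + 2/n)(1 + 4/n)/(k+1)³; moreover C(n,k) < 1. -/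

import Mathlib

lemma exp_cubic {y : ℝ} (hy : 0 ≤ y) : 1 + y + y^2/2 + y^3/6 ≤ Real.exp y := by
  have h := Real.sum_le_exp_of_nonneg hy 4
  norm_num [Finset.sum_range_succ, Nat.factorial] at h
  linarith

lemma log_quartic {u : ℝ} (h0 : 0 ≤ u) (h1 : u ≤ 1/2) :
    u + u^2/2 + u^3/3 + u^4/4 ≤ -Real.log (1 - u) := by
  have habs : |u| < 1 := by rw [abs_of_nonneg h0]; linarith
  have h := Real.abs_log_sub_add_sum_range_le habs 8
  rw [abs_of_nonneg h0] at h
  have h2 := (abs_le.mp h).2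
  have hs : (∑ i ∈ Finset.range 8, u ^ (i+1) / (i+1)) =
      u + u^2/2 + u^3/3 + u^4/4 + u^5/5 + u^6/6 + u^7/7 + u^8/8 := by
    norm_num [Finset.sum_range_succ]
  rw [hs] at h2
  have hden : (0:ℝ) < 1 - u := by linarith
  have htail : u^(8+1)/(1-u) ≤ u^5/5 + u^6/6 + u^7/7 + u^8/8 := by
    rw [div_le_iff₀ hden]
    nlinarith [pow_nonneg h0 5, pow_nonneg h0 6, pow_nonneg h0 7, pow_nonneg h0 8,
      pow_le_pow_left₀ h0 h1 4, pow_nonneg h0 4]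
  linarith

set_option maxHeartbeats 1000000 in

lemma Ucomb {u e : ℝ} (h0 : 0 < u) (h1 : u ≤ 1/2) (he : 0 < e) :
    1 + 2*e*u + e*(1+2*e)*u^2 + e*(1+e)*(1+2*e)*(u^3/(2-u)) + e*(1+e)*(1+2*e)*u^3/6
      ≤ 1 + 2*e*(u+u^2/2+u^3/3+u^4/4) + 2*e^2*(u+u^2/2+u^3/3+u^4/4)^2
        + (4/3)*e^3*(u+u^2/2+u^3/3+u^4/4)^3 := by
  set M : ℝ := u+u^2/2+u^3/3+u^4/4 with hM
  have h2u : (0:ℝ) < 2 - u := by linarith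
  set G : ℝ := u^3/(2-u) + u^3/6 with hG
  clear_value M G
  have hq2 : (0:ℝ) ≤ 1/4 - u^2 := by nlinarith
  have hq3 : (0:ℝ) ≤ 1/8 - u^3 := by nlinarith
  have hq4 : (0:ℝ) ≤ 1/16 - u^4 := by nlinarith
  have hq5 : (0:ℝ) ≤ 1/32 - u^5 := by nlinarith
  have hA1 : 2*u + u^2 + G ≤ 2*M := by
    have : u^3/(2-u) ≤ 2*M - 2*u - u^2 - u^3/6 := by
      rw [div_le_iff₀ h2u, hM]
      nlinarith [pow_nonneg h0.le 3, pow_nonneg h0.le 4, pow_nonneg h0.le 5]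
    rw [hG]; linarith
  have hA2 : 2*u^2 + 3*G ≤ 2*M^2 := by
    have : u^3/(2-u) ≤ (2*M^2 - 2*u^2 - 3*(u^3/6))/3 := by
      rw [div_le_div_iff₀ h2u (by norm_num), hM]
      nlinarith [pow_nonneg h0.le 3, pow_nonneg h0.le 4, pow_nonneg h0.le 5,
        pow_nonneg h0.le 6, pow_nonneg h0.le 7, pow_nonneg h0.le 8,
        mul_nonneg (pow_nonneg h0.le 4) hq2, mul_nonneg (pow_nonneg h0.le 4) hq3,
        mul_nonneg (pow_nonneg h0.le 4) hq4, mul_nonneg (pow_nonneg h0.le 4) hq5]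
    rw [hG]; linarith
  have hA3 : 2*G ≤ (4/3)*M^3 := by
    have : u^3/(2-u) ≤ ((4/3)*M^3 - 2*(u^3/6))/2 := by
      rw [div_le_div_iff₀ h2u (by norm_num), hM]
      nlinarith [pow_nonneg h0.le 3, pow_nonneg h0.le 4, pow_nonneg h0.le 5,
        pow_nonneg h0.le 6, pow_nonneg h0.le 7, pow_nonneg h0.le 8, pow_nonneg h0.le 9,
        mul_nonneg (pow_nonneg h0.le 4) hq2, mul_nonneg (pow_nonneg h0.le 4) hq3,
        mul_nonneg (pow_nonneg h0.le 4) hq4, mul_nonneg (pow_nonneg h0.le 4) hq5,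
        mul_nonneg (mul_nonneg (pow_nonneg h0.le 4) hq2) hq3]
    rw [hG]; linarith
  have key1 : 1 + 2*e*u + e*(1+2*e)*u^2 + e*(1+e)*(1+2*e)*(u^3/(2-u)) + e*(1+e)*(1+2*e)*u^3/6
      = 1 + e*(2*u+u^2+G) + e^2*(2*u^2+3*G) + e^3*(2*G) := by rw [hG]; ring
  have key2 : 1 + 2*e*M + 2*e^2*M^2 + (4/3)*e^3*M^3
      = 1 + e*(2*M) + e^2*(2*M^2) + e^3*((4/3)*M^3) := by ring
  rw [key1, key2]
  have p1 := mul_le_mul_of_nonneg_left hA1 he.le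
  have p2 := mul_le_mul_of_nonneg_left hA2 (by positivity : (0:ℝ) ≤ e^2)
  have p3 := mul_le_mul_of_nonneg_left hA3 (by positivity : (0:ℝ) ≤ e^3)
  linarith [p1, p2, p3]

lemma star {K e : ℝ} (hK : 1 ≤ K) (he : 0 < e) :
    K*(K+1) + (1+2*e)*(K+1+e+(1+e)*e/(2*K+1)) + e*(1+e)*(1+2*e)/(6*(K+1))
      ≤ (K+1)^2 * (((K+1)/K) ^ (2*e)) := by
  have hK0 : (0:ℝ) < K := by linarith
  have hK1 : (0:ℝ) < K + 1 := by linarith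
  have h2K : (0:ℝ) < 2*K+1 := by linarith
  set u : ℝ := 1/(K+1) with hu
  have hu0 : 0 < u := by positivity
  have hu2 : u ≤ 1/2 := by rw [hu]; rw [div_le_div_iff₀ hK1 (by norm_num)]; linarith
  set M : ℝ := u+u^2/2+u^3/3+u^4/4 with hM
  have hM0 : 0 ≤ M := by positivity
  -- R = exp(log((K+1)/K) * (2e)) ≥ exp(2e M) ≥ 1 + 2eM + 2e²M² + (4/3)e³M³
  have hbase : (0:ℝ) < (K+1)/K := by positivity
  have hlog : Real.log ((K+1)/K) = -Real.log (1-u) := by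
    have h1u : 1 - u = K/(K+1) := by rw [hu]; field_simp; ring
    rw [h1u, ← Real.log_inv]
    norm_num
  have hlogM : 2*e*M ≤ Real.log ((K+1)/K) * (2*e) := by
    rw [hlog]
    have := log_quartic hu0.le hu2
    rw [← hM] at this
    nlinarith
  have hE : 1 + 2*e*M + 2*e^2*M^2 + (4/3)*e^3*M^3 ≤ ((K+1)/K) ^ (2*e) := by
    rw [Real.rpow_def_of_pos hbase]
    have h1 : 1 + (2*e*M) + (2*e*M)^2/2 + (2*e*M)^3/6 ≤ Real.exp (2*e*M) :=
      exp_cubic (by positivity)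
    have h2 : Real.exp (2*e*M) ≤ Real.exp (Real.log ((K+1)/K) * (2*e)) :=
      Real.exp_le_exp.mpr hlogM
    nlinarith [h1, h2]
  have hU := Ucomb hu0 hu2 he
  rw [← hM] at hU
  -- identity: LHS = (K+1)^2 * (Ucomb LHS with u = 1/(K+1))
  have hid : K*(K+1) + (1+2*e)*(K+1+e+(1+e)*e/(2*K+1)) + e*(1+e)*(1+2*e)/(6*(K+1))
      = (K+1)^2 * (1 + 2*e*u + e*(1+2*e)*u^2 + e*(1+e)*(1+2*e)*(u^3/(2-u))
          + e*(1+e)*(1+2*e)*u^3/6) := by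
    rw [hu]
    have h2u : (2:ℝ) - 1/(K+1) = (2*K+1)/(K+1) := by field_simp; ring
    rw [h2u]
    field_simp
    ring
  rw [hid]
  have := mul_le_mul_of_nonneg_left (hU.trans hE) (by positivity : (0:ℝ) ≤ (K+1)^2)
  linarith

set_option maxHeartbeats 1000000 in
/-- The recursion formula of Cheng and Yang. -/
theorem stmt1 (n k : ℕ) (hn : 1 ≤ n) (hk : 1 ≤ k) (mu : ℕ → ℝ)
    (hpos : ∀ i, 1 ≤ i → i ≤ k + 1 → 0 < mu i)
    (hmono : ∀ i, 1 ≤ i → i ≤ k → mu i ≤ mu (i + 1))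
    (hyang : ∑ i ∈ Finset.Icc 1 k, (mu (k + 1) - mu i) ^ 2
      ≤ (4 / (n : ℝ)) * ∑ i ∈ Finset.Icc 1 k, mu i * (mu (k + 1) - mu i)) :
    (1 + 2 / (n : ℝ)) * ((1 / ((k : ℝ) + 1)) * ∑ i ∈ Finset.Icc 1 (k + 1), mu i) ^ 2
        - (1 / ((k : ℝ) + 1)) * ∑ i ∈ Finset.Icc 1 (k + 1), mu i ^ 2
      ≤ (1 - (1 / (3 * (n : ℝ))) * ((k : ℝ) / ((k : ℝ) + 1)) ^ ((4 : ℝ) / (n : ℝ)) *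
            ((1 + 2 / (n : ℝ)) * (1 + 4 / (n : ℝ)) / ((k : ℝ) + 1) ^ 3)) *
          (((k : ℝ) + 1) / (k : ℝ)) ^ ((4 : ℝ) / (n : ℝ)) *
          ((1 + 2 / (n : ℝ)) * ((1 / (k : ℝ)) * ∑ i ∈ Finset.Icc 1 k, mu i) ^ 2
            - (1 / (k : ℝ)) * ∑ i ∈ Finset.Icc 1 k, mu i ^ 2) ∧
    (1 - (1 / (3 * (n : ℝ))) * ((k : ℝ) / ((k : ℝ) + 1)) ^ ((4 : ℝ) / (n : ℝ)) *
        ((1 + 2 / (n : ℝ)) * (1 + 4 / (n : ℝ)) / ((k : ℝ) + 1) ^ 3)) < 1 := by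
  have hN1 : (1:ℝ) ≤ (n:ℝ) := by exact_mod_cast hn
  have hK1 : (1:ℝ) ≤ (k:ℝ) := by exact_mod_cast hk
  have hN0 : (0:ℝ) < (n:ℝ) := by linarith
  have hK0 : (0:ℝ) < (k:ℝ) := by linarith
  have hKp1 : (0:ℝ) < (k:ℝ) + 1 := by linarith
  have hRpos : (0:ℝ) < ((k:ℝ) / ((k:ℝ)+1)) ^ ((4:ℝ)/(n:ℝ)) :=
    Real.rpow_pos_of_pos (by positivity) _
  constructor
  case right =>
    have h1 : (0:ℝ) < (1 / (3 * (n:ℝ))) * ((k:ℝ)/((k:ℝ)+1)) ^ ((4:ℝ)/(n:ℝ)) *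
        ((1 + 2/(n:ℝ)) * (1 + 4/(n:ℝ)) / ((k:ℝ)+1) ^ 3) := by
      apply mul_pos (mul_pos (by positivity) hRpos)
      have h2 : (0:ℝ) < 1 + 2/(n:ℝ) := by positivity
      have h4 : (0:ℝ) < 1 + 4/(n:ℝ) := by positivity
      positivity
    linarith
  case left =>
  set N := (n:ℝ) with hNdef
  set K := (k:ℝ) with hKdef
  set e : ℝ := 2/N with hedef
  have he0 : (0:ℝ) < e := by rw [hedef]; positivity
  have h2K : (0:ℝ) < 2*K + 1 := by linarith
  -- normalize exponents and coefficients
  have h4N : (4:ℝ)/N = 2*e := by rw [hedef]; ring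
  have h2N : 1 + 2/N = 1 + e := by rw [hedef]
  have h4N' : 1 + 4/N = 1 + 2*e := by rw [hedef]; ring
  have h3N : 1/(3*N) = e/6 := by rw [hedef]; field_simp; ring
  rw [h2N, h4N', h4N, h3N]
  -- sums
  set S := ∑ i ∈ Finset.Icc 1 k, mu i with hSdef
  set S2 := ∑ i ∈ Finset.Icc 1 k, mu i ^ 2 with hS2def
  set m := mu (k+1) with hmdef
  have hsum1 : ∑ i ∈ Finset.Icc 1 (k+1), mu i = S + m := Finset.sum_Icc_succ_top (by omega) _
  have hsum2 : ∑ i ∈ Finset.Icc 1 (k+1), mu i ^ 2 = S2 + m^2 :=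
    Finset.sum_Icc_succ_top (by omega) _
  rw [hsum1, hsum2]
  have hS0 : 0 < S := by
    rw [hSdef]
    apply Finset.sum_pos
    · intro i hi
      rw [Finset.mem_Icc] at hi
      exact hpos i hi.1 (by omega)
    · exact ⟨1, by simp [Finset.mem_Icc]; omega⟩
  -- expand hyang
  have hcard : ((Finset.Icc 1 k).card : ℝ) = K := by
    rw [Nat.card_Icc]; norm_num; exact hKdef.symm
  have hy : K*m^2 - 2*m*S + S2 ≤ 2*e*(m*S - S2) := by
    have e1 : ∑ i ∈ Finset.Icc 1 k, (m - mu i)^2 = K*m^2 - 2*m*S + S2 := by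
      simp only [sub_sq, Finset.sum_add_distrib, Finset.sum_sub_distrib, ← Finset.mul_sum,
        Finset.sum_const, nsmul_eq_mul, ← hSdef, ← hS2def, hcard]
      try ring
    have e2 : ∑ i ∈ Finset.Icc 1 k, mu i * (m - mu i) = m*S - S2 := by
      simp only [mul_sub, Finset.sum_sub_distrib]
      rw [show ∑ i ∈ Finset.Icc 1 k, mu i * m = S * m by rw [hSdef, Finset.sum_mul],
        show ∑ i ∈ Finset.Icc 1 k, mu i * mu i = S2 by rw [hS2def]; congr 1; funext i; ring]
      ring
    have h4e : (4:ℝ)/N = 2*e := h4N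
    rw [e1, e2, h4e] at hyang
    linarith
  -- main quantities
  set L : ℝ := S/K with hLdef
  set T : ℝ := S2/K with hTdef
  set F : ℝ := (1+e)*L^2 - T with hFdef
  set w : ℝ := m - (1+e)*L with hwdef
  have hSL : S = K*L := by rw [hLdef]; field_simp
  have hS2T : S2 = K*T := by rw [hTdef]; field_simp
  have hL0 : 0 < L := by rw [hLdef]; positivity
  have hq : m^2 - 2*(1+e)*L*m + (1+2*e)*T ≤ 0 := by
    rw [hSL, hS2T] at hy
    have hX : K * (m^2 - 2*(1+e)*L*m + (1+2*e)*T) ≤ 0 := by linarith [hy]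
    by_contra hc
    push_neg at hc
    exact absurd hX (not_le.mpr (mul_pos hK0 hc))
  have h2 : w^2 ≤ (1+2*e)*F - (1+e)*e*L^2 := by
    rw [hwdef, hFdef]; linarith [hq]
  have hF0 : 0 < F := by
    have hp1 : (0:ℝ) < (1+e)*e*L^2 := by
      have := mul_pos (mul_pos (by linarith : (0:ℝ) < 1+e) he0) (mul_pos hL0 hL0)
      calc (0:ℝ) < (1+e)*e*(L*L) := this
        _ = (1+e)*e*L^2 := by ring
    have h12F : 0 < (1+2*e)*F := by linarith [sq_nonneg w, h2]
    by_contra hc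
    push_neg at hc
    have : (1+2*e)*F ≤ 0 := mul_nonpos_of_nonneg_of_nonpos (by linarith) hc
    linarith
  set lam : ℝ := K+1+e+(1+e)*e/(2*K+1) with hlamdef
  have hlam0 : 0 ≤ lam := by
    rw [hlamdef]
    have : 0 ≤ (1+e)*e/(2*K+1) := by positivity
    linarith
  -- the key identity
  have hident : (K+1)^2 * ((1+e)*((1/(K+1))*(S+m))^2 - (1/(K+1))*(S2+m^2))
      = K*(K+1)*F + ((1+e)*e*((1+e)+K)*L^2 + 2*(1+e)*e*L*w - (K-e)*w^2) := by
    rw [hSL, hS2T, show m = w + (1+e)*L by rw [hwdef]; ring, hFdef]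
    field_simp
    ring
  -- the quadratic form bound
  have hQle : (1+e)*e*((1+e)+K)*L^2 + 2*(1+e)*e*L*w - (K-e)*w^2
      ≤ lam * ((1+e)*e*L^2 + w^2) := by
    have hkey : (2*K+1) * (lam * ((1+e)*e*L^2 + w^2)
        - ((1+e)*e*((1+e)+K)*L^2 + 2*(1+e)*e*L*w - (K-e)*w^2))
        = ((1+e)*e*L - (2*K+1)*w)^2 + (1+e)*e*w^2 := by
      rw [hlamdef]; field_simp; ring
    have hrhs : 0 ≤ ((1+e)*e*L - (2*K+1)*w)^2 + (1+e)*e*w^2 := by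
      have := mul_nonneg (mul_nonneg (by linarith : (0:ℝ) ≤ 1+e) he0.le) (sq_nonneg w)
      linarith [sq_nonneg ((1+e)*e*L - (2*K+1)*w)]
    rw [← hkey] at hrhs
    have := (mul_nonneg_iff_of_pos_left h2K).mp hrhs
    linarith
  have hwD : (1+e)*e*L^2 + w^2 ≤ (1+2*e)*F := by linarith
  -- assemble
  have hstep : (K+1)^2 * ((1+e)*((1/(K+1))*(S+m))^2 - (1/(K+1))*(S2+m^2))
      ≤ (K*(K+1) + lam*(1+2*e)) * F := by
    rw [hident]
    have := mul_le_mul_of_nonneg_left hwD hlam0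
    linarith [hQle]
  have hstar := star hK1 he0
  rw [← hlamdef] at hstar
  -- RHS manipulation
  set R : ℝ := ((K+1)/K) ^ (2*e) with hRdef
  set R' : ℝ := (K/(K+1)) ^ (2*e) with hR'def
  have hRR' : R' * R = 1 := by
    rw [hRdef, hR'def, ← Real.mul_rpow (by positivity) (by positivity)]
    rw [show K/(K+1) * ((K+1)/K) = 1 by field_simp]
    exact Real.one_rpow _
  have hgoalRHS : (1 - e/6 * R' * ((1+e)*(1+2*e)/(K+1)^3)) * R * ((1+e)*((1/K)*S)^2 - (1/K)*S2)
      = (R - e/6 * ((1+e)*(1+2*e)/(K+1)^3)) * F := by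
    have hFS : (1+e)*((1/K)*S)^2 - (1/K)*S2 = F := by
      rw [hFdef, hSL, hS2T]; field_simp
      try ring
    rw [hFS]
    have : (1 - e/6 * R' * ((1+e)*(1+2*e)/(K+1)^3)) * R
        = R - e/6 * (R'*R) * ((1+e)*(1+2*e)/(K+1)^3) := by ring
    rw [this, hRR']; ring
  rw [hgoalRHS]
  -- final comparison
  have hfinal : (K*(K+1) + lam*(1+2*e)) * F
      ≤ (K+1)^2 * ((R - e/6 * ((1+e)*(1+2*e)/(K+1)^3)) * F) := by
    have hcoef : K*(K+1) + lam*(1+2*e) ≤ (K+1)^2 * (R - e/6 * ((1+e)*(1+2*e)/(K+1)^3)) := by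
      have hexp : (K+1)^2 * (R - e/6 * ((1+e)*(1+2*e)/(K+1)^3))
          = (K+1)^2 * R - e*(1+e)*(1+2*e)/(6*(K+1)) := by
        field_simp
      rw [hexp]
      linarith [hstar]
    calc (K*(K+1) + lam*(1+2*e)) * F ≤ ((K+1)^2 * (R - e/6 * ((1+e)*(1+2*e)/(K+1)^3))) * F :=
          mul_le_mul_of_nonneg_right hcoef hF0.le
      _ = (K+1)^2 * ((R - e/6 * ((1+e)*(1+2*e)/(K+1)^3)) * F) := by ring
  have hfin2 : (K+1)^2 * ((1+e)*((1/(K+1))*(S+m))^2 - (1/(K+1))*(S2+m^2))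
      ≤ (K+1)^2 * ((R - e/6 * ((1+e)*(1+2*e)/(K+1)^3)) * F) := le_trans hstep hfinal
  have := (mul_le_mul_iff_right₀ (by positivity : (0:ℝ) < (K+1)^2)).mp hfin2
  linarith
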